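/- Let A be a semiperfect unital associative F-algebra (the identity 1 can be written as a sum 1 = e₁ + ⋯ + e_n of pairwise orthogonal idempotents with each corner algebra e_i A e_i a local ring) such that A/R is finite-dimensional over F, where R is the Jacobson radical of A. Let E be the unital F-subalgebra of A generated by all idempotent elements of A, and let e be an idempotent of A. Then the left A-module Ae is zero action determined if and only if Ae = Ee. -/

import Mathlib

/-- A unital left `A`-module `V` (with compatible `F`-vector space structure) is
*zero action determined* (zad) if every `F`-bilinear map `f : A × V → F` vanishing on
pairs with zero action is of the form `f(x, v) = Φ(x • v)` for some linear `Φ`. -/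
def IsZad (F A V : Type*) [Field F] [Ring A] [Algebra F A]
    [AddCommGroup V] [Module F V] [Module A V] [IsScalarTower F A V] : Prop :=
  ∀ f : A →ₗ[F] V →ₗ[F] F,
    (∀ (a : A) (m : V), a • m = 0 → f a m = 0) →
    ∃ Φ : V →ₗ[F] F, ∀ (x : A) (v : V), f x v = Φ (x • v)

namespace Stmt19

variable {F A : Type*} [Field F] [Ring A] [Algebra F A]

lemma exists_dual_sep {M : Type*} [AddCommGroup M] [Module F M]
    (U : Submodule F M) {y : M} (hy : y ∉ U) :
    ∃ φ : M →ₗ[F] F, (∀ u ∈ U, φ u = 0) ∧ φ y = 1 := by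
  have h0 : U.mkQ y ≠ 0 := by
    simpa [Submodule.mkQ_apply, Submodule.Quotient.mk_eq_zero] using hy
  obtain ⟨δ, hδ⟩ : ∃ δ : (M ⧸ U) →ₗ[F] F, δ (U.mkQ y) ≠ 0 := by
    by_contra h; push_neg at h
    exact h0 ((Module.forall_dual_apply_eq_zero_iff F _).mp h)
  refine ⟨(δ (U.mkQ y))⁻¹ • (δ.comp U.mkQ), fun u hu => ?_, ?_⟩
  · simp [Submodule.mkQ_apply, (Submodule.Quotient.mk_eq_zero _).2 hu]
  · simpa using inv_mul_cancel₀ hδ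

lemma offdiag_mem {p q : A} (x : A) (hp : IsIdempotentElem p) (hq : IsIdempotentElem q)
    (hqp : q * p = 0) :
    p * x * q ∈ Algebra.adjoin F {y : A | IsIdempotentElem y} := by
  have hidem : IsIdempotentElem (p + p * x * q) := by
    have h1 : p * (p * x * q) = p * x * q := by
      rw [show p * (p * x * q) = (p * p) * x * q by noncomm_ring, hp]
    have h2 : (p * x * q) * p = 0 := by
      rw [show (p * x * q) * p = p * x * (q * p) by noncomm_ring, hqp, mul_zero]
    have h3 : (p * x * q) * (p * x * q) = 0 := by
      rw [show (p * x * q) * (p * x * q) = p * x * ((q * p) * (x * q)) by noncomm_ring,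
        hqp, zero_mul, mul_zero]
    unfold IsIdempotentElem
    rw [show (p + p*x*q) * (p + p*x*q)
        = p*p + p*(p*x*q) + ((p*x*q)*p + (p*x*q)*(p*x*q)) by noncomm_ring,
      hp, h1, h2, h3]
    abel
  have := Subalgebra.sub_mem (Algebra.adjoin F {y : A | IsIdempotentElem y})
    (Algebra.subset_adjoin (show _ ∈ {y : A | IsIdempotentElem y} from hidem))
    (Algebra.subset_adjoin (show p ∈ {y : A | IsIdempotentElem y} from hp))
  rwa [add_sub_cancel_left] at this

lemma one_sub_idem {g : A} (hg : IsIdempotentElem g) : IsIdempotentElem (1 - g) := by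
  have h : (1 - g) * (1 - g) = 1 - g - (g - g * g) := by noncomm_ring
  unfold IsIdempotentElem at *
  rw [h, hg, sub_self, sub_zero]

lemma corner_shift {g : A} (hg : IsIdempotentElem g) (a b : A) :
    g * a * (1 - g) * b ∈ Algebra.adjoin F {y : A | IsIdempotentElem y} := by
  have hg' : (1 - g) * g = 0 := by
    have := hg; unfold IsIdempotentElem at this
    rw [sub_mul, one_mul, this, sub_self]
  have hg'' : g * (1 - g) = 0 := by
    have := hg; unfold IsIdempotentElem at this
    rw [mul_sub, mul_one, this, sub_self]
  have h1 : g * a * (1 - g) ∈ Algebra.adjoin F {y : A | IsIdempotentElem y} :=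
    offdiag_mem a hg (one_sub_idem hg) hg'
  have h2 : (1 - g) * b * g ∈ Algebra.adjoin F {y : A | IsIdempotentElem y} :=
    offdiag_mem b (one_sub_idem hg) hg hg''
  have h3 : g * (a * (1 - g) * b) * (1 - g) ∈ Algebra.adjoin F {y : A | IsIdempotentElem y} :=
    offdiag_mem _ hg (one_sub_idem hg) hg'
  have key : g * a * (1 - g) * b
      = (g * a * (1 - g)) * ((1 - g) * b * g) + g * (a * (1 - g) * b) * (1 - g) := by
    have h4 : (1 - g) * (1 - g) = (1 - g) := one_sub_idem hg
    calc g * a * (1 - g) * b = g * a * (1 - g) * b * (g + (1 - g)) := by noncomm_ring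
      _ = g * a * ((1 - g) * (1 - g)) * b * g + g * (a * (1 - g) * b) * (1 - g) := by
          rw [h4]; noncomm_ring
      _ = (g * a * (1 - g)) * ((1 - g) * b * g) + g * (a * (1 - g) * b) * (1 - g) := by
          noncomm_ring
  rw [key]
  exact add_mem (mul_mem h1 h2) h3

lemma move_adjoin {V : Type*} [AddCommGroup V] [Module F V] [Module A V] [IsScalarTower F A V]
    (f : A →ₗ[F] V →ₗ[F] F)
    (hf : ∀ (a : A) (m : V), a • m = 0 → f a m = 0)
    {p : A} (hp : p ∈ Algebra.adjoin F {y : A | IsIdempotentElem y}) :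
    ∀ (x : A) (m : V), f (x * p) m = f x (p • m) := by
  induction hp using Algebra.adjoin_induction with
  | mem q hq =>
    intro x m
    have hq' : q * q = q := hq
    have h1' : f (x * q) m = f (x * q) (q • m) := by
      have hs : (x * q) • (m - q • m) = 0 := by
        rw [smul_sub, ← mul_smul, mul_assoc, hq', sub_self]
      have h := hf _ _ hs
      rw [map_sub] at h
      exact sub_eq_zero.mp h
    have h2' : f x (q • m) = f (x * q) (q • m) := by
      have hs : (x - x * q) • (q • m) = 0 := by
        rw [sub_smul, ← mul_smul, ← mul_smul, mul_assoc, hq', sub_self]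
      have h := hf _ _ hs
      rw [map_sub, LinearMap.sub_apply] at h
      exact sub_eq_zero.mp h
    rw [h1', h2']
  | algebraMap r =>
    intro x m
    have h1 : x * algebraMap F A r = r • x := by
      rw [Algebra.smul_def, Algebra.commutes]
    have h2 : (algebraMap F A r) • m = r • m := algebraMap_smul A r m
    rw [h1, h2, map_smul, LinearMap.smul_apply, map_smul]
  | add p q hp hq ihp ihq =>
    intro x m
    rw [mul_add, map_add, LinearMap.add_apply, ihp, ihq, add_smul, map_add]
  | mul p q hp hq ihp ihq =>
    intro x m
    rw [← mul_assoc, ihq, ihp, mul_smul]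

end Stmt19


namespace Stmt19

variable {F A : Type*} [Field F] [Ring A] [Algebra F A]

/-- `x` is invertible in the corner ring `gAg`. -/
def IsCU (g x : A) : Prop := ∃ b, x * (g * b * g) = g ∧ (g * b * g) * x = g

lemma corner_left {g x : A} (hg : IsIdempotentElem g) (hx : g * x * g = x) : g * x = x := by
  calc g * x = g * (g * x * g) := by rw [hx]
    _ = (g * g) * x * g := by noncomm_ring
    _ = g * x * g := by rw [hg]
    _ = x := hx

lemma corner_right {g x : A} (hg : IsIdempotentElem g) (hx : g * x * g = x) : x * g = x := by
  calc x * g = (g * x * g) * g := by rw [hx]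
    _ = g * x * (g * g) := by noncomm_ring
    _ = g * x * g := by rw [hg]
    _ = x := hx

lemma cu_of_inv_cu {g : A} (hg : IsIdempotentElem g) {x u b' : A}
    (hx : g * x * g = x) (hb' : g * b' * g = b') (hu1 : u * b' = g) (hu2 : b' * u = g)
    (hug : u * g = u) (hcu : IsCU g (b' * x)) : IsCU g x := by
  obtain ⟨d, h1, h2⟩ := hcu
  set D := g * d * g with hD
  have hDc : g * D * g = D := by
    calc g * (g * d * g) * g = (g * g) * d * (g * g) := by noncomm_ring
      _ = g * d * g := by rw [hg]
  have hxgd : x * D = u := by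
    have hgx : g * x = x := corner_left hg hx
    calc x * D = (g * x) * D := by rw [hgx]
      _ = ((u * b') * x) * D := by rw [hu1]
      _ = u * ((b' * x) * D) := by noncomm_ring
      _ = u * g := by rw [h1]
      _ = u := hug
  refine ⟨D * b', ?_, ?_⟩
  · have hDb : g * (D * b') * g = D * b' := by
      have h3 : g * D = D := corner_left hg hDc
      have h4 : b' * g = b' := corner_right hg hb'
      calc g * (D * b') * g = (g * D) * (b' * g) := by noncomm_ring
        _ = D * b' := by rw [h3, h4]
    rw [hDb, ← mul_assoc, hxgd, hu1]
  · have hDb : g * (D * b') * g = D * b' := by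
      have h3 : g * D = D := corner_left hg hDc
      have h4 : b' * g = b' := corner_right hg hb'
      calc g * (D * b') * g = (g * D) * (b' * g) := by noncomm_ring
        _ = D * b' := by rw [h3, h4]
    rw [hDb, mul_assoc, h2]

variable (F) in
/-- The set of non-invertible elements of the corner ring `gAg`, as an `F`-subspace of `A`. -/
def Jsub (g : A) (hg : IsIdempotentElem g) (hg0 : g ≠ 0)
    (hL : ∀ a : A, IsCU g (g * a * g) ∨ IsCU g (g - g * a * g)) : Submodule F A where
  carrier := {x | g * x * g = x ∧ ¬ IsCU g x}
  zero_mem' := by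
    refine ⟨by simp, ?_⟩
    rintro ⟨b, h1, h2⟩
    exact hg0 (by simpa using h1.symm)
  add_mem' := by
    rintro x y ⟨hxc, hxn⟩ ⟨hyc, hyn⟩
    refine ⟨by rw [mul_add, add_mul, hxc, hyc], ?_⟩
    rintro ⟨b, hb1, hb2⟩
    set b' := g * b * g with hb'def
    have hb' : g * b' * g = b' := by
      calc g * (g * b * g) * g = (g * g) * b * (g * g) := by noncomm_ring
        _ = g * b * g := by rw [hg]
    have hug : (x + y) * g = x + y := by
      rw [add_mul, corner_right hg hxc, corner_right hg hyc]
    have hbxc : g * (b' * x) * g = b' * x := by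
      have h3 : g * b' = b' := corner_left hg hb'
      have h4 : x * g = x := corner_right hg hxc
      calc g * (b' * x) * g = (g * b') * (x * g) := by noncomm_ring
        _ = b' * x := by rw [h3, h4]
    rcases hL (b' * x) with h | h
    · rw [hbxc] at h
      exact hxn (cu_of_inv_cu hg hxc hb' hb1 hb2 hug h)
    · rw [hbxc] at h
      have hby : g - b' * x = b' * y := by
        rw [← hb2, mul_add]; abel
      rw [hby] at h
      exact hyn (cu_of_inv_cu hg hyc hb' hb1 hb2 hug h)
  smul_mem' := by
    rintro c x ⟨hxc, hxn⟩
    refine ⟨by rw [mul_smul_comm, smul_mul_assoc, hxc], ?_⟩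
    rintro ⟨b, hb1, hb2⟩
    apply hxn
    refine ⟨c • b, ?_, ?_⟩
    · have h1 : g * (c • b) * g = c • (g * b * g) := by
        rw [mul_smul_comm, smul_mul_assoc]
      rw [h1, mul_smul_comm, ← smul_mul_assoc, hb1]
    · have h1 : g * (c • b) * g = c • (g * b * g) := by
        rw [mul_smul_comm, smul_mul_assoc]
      rw [h1, smul_mul_assoc, ← mul_smul_comm, hb2]

end Stmt19

/-- let `A` be a semiperfect algebra (1 is a sum of pairwise orthogonal
idempotents whose corner algebras `eᵢAeᵢ` are local rings) with `A/R` finite-dimensional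
over `F` (`R` the Jacobson radical), let `E` be the subalgebra generated by all
idempotents and `e` an idempotent.  Then `Ae` is zad iff `Ae = Ee`.
A corner algebra `eᵢAeᵢ` (with unit `eᵢ`) is local iff `eᵢ ≠ 0` and for every element
`x = eᵢaeᵢ` of the corner, `x` or `eᵢ - x` is invertible in the corner. -/
theorem stmt_19 (F A : Type*) [Field F] [Ring A] [Algebra F A]
    (hsemiperfect : ∃ (n : ℕ) (es : Fin n → A),
      (∀ i, IsIdempotentElem (es i)) ∧
      (∀ i j, i ≠ j → es i * es j = 0) ∧
      (∑ i, es i) = 1 ∧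
      (∀ i, es i ≠ 0 ∧ ∀ a : A,
        (∃ b : A, (es i * a * es i) * (es i * b * es i) = es i ∧
          (es i * b * es i) * (es i * a * es i) = es i) ∨
        (∃ b : A, (es i - es i * a * es i) * (es i * b * es i) = es i ∧
          (es i * b * es i) * (es i - es i * a * es i) = es i)))
    (hfin : FiniteDimensional F (A ⧸ (Ideal.jacobson (⊥ : Ideal A))))
    (e : A) (he : IsIdempotentElem e) :
    IsZad F A ↥(Ideal.span {e} : Ideal A) ↔
      (↑(Ideal.span {e} : Ideal A) : Set A) =
        {x : A | ∃ a ∈ Algebra.adjoin F {x : A | IsIdempotentElem x}, a * e = x} := by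
  classical
  obtain ⟨n, es, hidem, horth, hsum, hloc⟩ := hsemiperfect
  set EA := Algebra.adjoin F {x : A | IsIdempotentElem x} with hEAdef
  set I : Ideal A := Ideal.span {e} with hIdef
  have heI : e ∈ I := Submodule.mem_span_singleton_self e
  set eV : ↥I := ⟨e, heI⟩ with heVdef
  set EEs : Submodule F A :=
    Submodule.map (LinearMap.mulRight F e) (Subalgebra.toSubmodule EA) with hEEsdef
  have hEEs_mem : ∀ x : A, x ∈ EEs ↔ ∃ a ∈ EA, a * e = x := by
    intro x
    simp [hEEsdef, Submodule.mem_map, LinearMap.mulRight_apply]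
  have hmkEEs : ∀ p : A, p ∈ EA → p * e ∈ EEs := by
    intro p hp
    exact (hEEs_mem _).mpr ⟨p, hp, rfl⟩
  have hIel : ∀ v : ↥I, ∃ a : A, a * e = (v : A) := by
    intro v
    obtain ⟨a, ha⟩ := Submodule.mem_span_singleton.mp v.2
    exact ⟨a, by rw [← ha]; rfl⟩
  have hsmulcoe : ∀ (x : A) (m : ↥I), ((x • m : ↥I) : A) = x * (m : A) := by
    intro x m; rfl
  constructor
  · -- zad → Ae = Ee
    intro hzad
    by_contra hne
    have hsub : {x : A | ∃ a ∈ EA, a * e = x} ⊆ (↑I : Set A) := by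
      rintro x ⟨a, -, rfl⟩
      exact Submodule.mem_span_singleton.mpr ⟨a, by rw [smul_eq_mul]⟩
    obtain ⟨y, hyI, hyE⟩ : ∃ y ∈ (↑I : Set A), y ∉ {x : A | ∃ a ∈ EA, a * e = x} := by
      by_contra h
      push_neg at h
      exact hne (Set.Subset.antisymm h hsub)
    obtain ⟨c₀, hc₀⟩ := Submodule.mem_span_singleton.mp hyI
    have hc₀e : c₀ * e ∉ EEs := by
      intro hmem
      exact hyE (by rw [← smul_eq_mul] at *; exact hc₀ ▸ ((hEEs_mem _).mp (by rwa [smul_eq_mul])))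
    -- reduction to a diagonal corner
    have hdiag : ∃ i, (es i * c₀ * es i) * e ∉ EEs := by
      by_contra h
      push_neg at h
      apply hc₀e
      have hdecomp : c₀ = ∑ j, ∑ k, es j * c₀ * es k := by
        calc c₀ = (∑ j, es j) * c₀ * (∑ k, es k) := by rw [hsum, one_mul, mul_one]
          _ = ∑ j, ∑ k, es j * c₀ * es k := by
              rw [Finset.sum_mul, Finset.sum_mul]
              exact Finset.sum_congr rfl fun j _ => by rw [Finset.mul_sum]
      have : c₀ * e = ∑ j, ∑ k, (es j * c₀ * es k) * e := by
        conv_lhs => rw [hdecomp]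
        rw [Finset.sum_mul]
        exact Finset.sum_congr rfl fun j _ => by rw [Finset.sum_mul]
      rw [this]
      refine Submodule.sum_mem _ fun j _ => Submodule.sum_mem _ fun k _ => ?_
      by_cases hjk : j = k
      · subst hjk; exact h j
      · exact hmkEEs _ (Stmt19.offdiag_mem c₀ (hidem j) (hidem k) (horth k j (Ne.symm hjk)))
    obtain ⟨i, hd⟩ := hdiag
    set g := es i with hgdef
    have hg : IsIdempotentElem g := hidem i
    have hg0 : g ≠ 0 := (hloc i).1
    have hL : ∀ a : A, Stmt19.IsCU g (g * a * g) ∨ Stmt19.IsCU g (g - g * a * g) := (hloc i).2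
    set d := g * c₀ * g with hddef
    have hdc : g * d * g = d := by
      calc g * (g * c₀ * g) * g = (g * g) * c₀ * (g * g) := by noncomm_ring
        _ = g * c₀ * g := by rw [hg]
    have hde : d * e ∉ EEs := hd
    set J : Submodule F A := Stmt19.Jsub F g hg hg0 hL with hJdef
    have hψJ_mem : ∀ x : A, g * x * g = x → ¬ Stmt19.IsCU g x → x ∈ J := by
      intro x h1 h2; exact ⟨h1, h2⟩
    set W : Submodule F A :=
      Submodule.span F {z : A | ∃ a c : A, z = g * a * ((1 - g) * (c * e))} with hWdef
    have hWle : W ≤ EEs := by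
      rw [hWdef, Submodule.span_le]
      rintro z ⟨a, c, rfl⟩
      have hz : g * a * ((1 - g) * (c * e)) = (g * a * (1 - g) * c) * e := by noncomm_ring
      rw [hz]
      exact hmkEEs _ (Stmt19.corner_shift hg a c)
    have hgE : g ∈ EA := Algebra.subset_adjoin hg
    have hge_mem : g * e ∈ EEs := hmkEEs _ hgE
    -- choose the functionals
    obtain ⟨ψ, χ, hψJ, hχW, hne2⟩ : ∃ ψ χ : A →ₗ[F] F,
        (∀ z ∈ J, ψ z = 0) ∧ (∀ z ∈ W, χ z = 0) ∧
        ψ d * χ (g * e) ≠ ψ g * χ (d * e) := by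
      by_cases hcase : d ∈ J ⊔ Submodule.span F {g}
      · obtain ⟨r, hr, t, ht, hrt⟩ := Submodule.mem_sup.mp hcase
        obtain ⟨α, hα⟩ := Submodule.mem_span_singleton.mp ht
        have hsplit : d * e = r * e + α • (g * e) := by
          rw [← hrt, add_mul, ← hα, smul_mul_assoc]
        have hre : r * e ∉ EEs := by
          intro hmem
          exact hde (hsplit ▸ add_mem hmem (Submodule.smul_mem _ _ hge_mem))
        obtain ⟨χ, hχE, hχr⟩ := Stmt19.exists_dual_sep EEs hre
        have hgJ : g ∉ J := by
          intro hgJ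
          exact hgJ.2 ⟨g, by rw [show g * (g * g * g) = (g*g)*(g*g) by noncomm_ring, hg, hg],
            by rw [show (g * g * g) * g = (g*g)*(g*g) by noncomm_ring, hg, hg]⟩
        obtain ⟨ψ, hψ, hψg⟩ := Stmt19.exists_dual_sep J hgJ
        refine ⟨ψ, χ, hψ, fun z hz => hχE z (hWle hz), ?_⟩
        have h1 : χ (g * e) = 0 := hχE _ hge_mem
        have h3 : χ (d * e) = 1 := by
          rw [hsplit, map_add, map_smul, hχr, h1, smul_zero, add_zero]
        rw [h1, h3, hψg, mul_zero, one_mul]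
        exact zero_ne_one
      · obtain ⟨ψ, hψ, hψd⟩ := Stmt19.exists_dual_sep (J ⊔ Submodule.span F {g}) hcase
        have hgeW : g * e ∉ W := by
          intro hmem
          apply hde
          have hstab : d * (g * e) ∈ W := by
            refine Submodule.span_induction ?_ ?_ ?_ ?_ hmem
            · rintro z ⟨a, c, rfl⟩
              refine Submodule.subset_span ⟨c₀ * (g * a), c, ?_⟩
              calc d * (g * a * ((1 - g) * (c * e)))
                  = g * c₀ * (g * g) * a * ((1 - g) * (c * e)) := by rw [hddef]; noncomm_ring
                _ = g * c₀ * g * a * ((1 - g) * (c * e)) := by rw [hg]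
                _ = g * (c₀ * (g * a)) * ((1 - g) * (c * e)) := by noncomm_ring
            · simpa using W.zero_mem
            · intro z₁ z₂ _ _ h₁ h₂
              rw [mul_add]; exact add_mem h₁ h₂
            · intro c z _ h
              rw [mul_smul_comm]; exact W.smul_mem c h
          have hdg : d * (g * e) = d * e := by
            rw [← mul_assoc, Stmt19.corner_right hg hdc]
          rw [hdg] at hstab
          exact hWle hstab
        obtain ⟨χ, hχW, hχg⟩ := Stmt19.exists_dual_sep W hgeW
        refine ⟨ψ, χ, fun z hz => hψ z (le_sup_left (a := J) hz), hχW, ?_⟩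
        have hgsup : g ∈ J ⊔ Submodule.span F {g} :=
          le_sup_right (a := J) (Submodule.mem_span_singleton_self g)
        rw [hψd, hχg, hψ g hgsup, one_mul, zero_mul]
        exact one_ne_zero
    -- the bilinear map
    set f : A →ₗ[F] ↥I →ₗ[F] F :=
      LinearMap.mk₂ F (fun x m => ψ (g * x * g) * χ (g * (m : A)))
        (fun x y m => by
          rw [mul_add, add_mul, map_add, add_mul])
        (fun c x m => by
          rw [mul_smul_comm, smul_mul_assoc, map_smul, smul_eq_mul, mul_assoc]
          rfl)
        (fun x m₁ m₂ => by
          rw [Submodule.coe_add, mul_add, map_add, mul_add])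
        (fun c x m => by
          rw [show ((c • m : ↥I) : A) = c • (m : A) from rfl, mul_smul_comm, map_smul,
            mul_smul_comm]) with hfdef
    have hfapp : ∀ (x : A) (m : ↥I), f x m = ψ (g * x * g) * χ (g * (m : A)) := by
      intro x m; rw [hfdef]; rfl
    have hf : ∀ (x : A) (m : ↥I), x • m = 0 → f x m = 0 := by
      intro x m hxm
      have hxm' : x * (m : A) = 0 := by
        have := congrArg (Subtype.val) hxm
        rwa [hsmulcoe] at this
      rw [hfapp]
      by_cases hcu : Stmt19.IsCU g (g * x * g)
      · obtain ⟨b, hb1, hb2⟩ := hcu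
        obtain ⟨cm, hcm⟩ := hIel m
        have hsplit : (g * x * g) * (m : A) + g * x * ((1 - g) * (m : A)) = 0 := by
          have h0 : (g * x * g) * (m : A) + g * x * ((1 - g) * (m : A)) = g * (x * (m : A)) := by
            noncomm_ring
          rw [h0, hxm', mul_zero]
        have hgm : g * (m : A) = (g * b * g) * ((g * x * g) * (m : A)) := by
          rw [show (g*b*g) * ((g*x*g) * (m : A)) = ((g*b*g)*(g*x*g)) * (m : A) from
            (mul_assoc _ _ _).symm, hb2]
        have hneg : (g * x * g) * (m : A) = -(g * x * ((1 - g) * (m : A))) :=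
          eq_neg_of_add_eq_zero_left hsplit
        have key : g * (m : A) = -(g * (b * (g * x)) * ((1 - g) * (cm * e))) := by
          rw [hgm, hneg, mul_neg, hcm]
          congr 1
          calc (g * b * g) * (g * x * ((1 - g) * (m : A)))
              = g * b * ((g * g) * (x * ((1 - g) * (m : A)))) := by noncomm_ring
            _ = g * b * (g * (x * ((1 - g) * (m : A)))) := by rw [hg]
            _ = g * (b * (g * x)) * ((1 - g) * (m : A)) := by noncomm_ring
        have hWmem : g * (b * (g * x)) * ((1 - g) * (cm * e)) ∈ W :=
          Submodule.subset_span ⟨b * (g * x), cm, rfl⟩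
        rw [key, map_neg, hχW _ hWmem, neg_zero, mul_zero]
      · have hmemJ : g * x * g ∈ J := by
          refine hψJ_mem _ ?_ hcu
          calc g * (g * x * g) * g = (g * g) * x * (g * g) := by noncomm_ring
            _ = g * x * g := by rw [hg]
        rw [hψJ _ hmemJ, zero_mul]
    obtain ⟨Φ, hΦ⟩ := hzad f hf
    apply hne2
    have e1 := hΦ d eV
    have e2 := hΦ 1 (d • eV)
    rw [one_smul] at e2
    have hv1 : f d eV = ψ d * χ (g * e) := by
      rw [hfapp, hdc]
    have hv2 : f 1 (d • eV) = ψ g * χ (d * e) := by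
      rw [hfapp]
      have h1 : g * (1:A) * g = g := by rw [mul_one, hg]
      have h2 : ((d • eV : ↥I) : A) = d * e := by rw [hsmulcoe]
      rw [h1, h2, ← mul_assoc, Stmt19.corner_left hg hdc]
    rw [← hv1, ← hv2, e1, e2]
  · -- Ae = Ee → zad
    intro hset f hf
    set S : A →ₗ[F] ↥I :=
      { toFun := fun a => a • eV
        map_add' := fun a b => by rw [add_smul]
        map_smul' := fun c a => by rw [smul_assoc]; rfl } with hSdef
    have hSapp : ∀ a : A, S a = a • eV := fun a => rfl
    have hSsurj : Function.Surjective S := by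
      intro v
      obtain ⟨a, ha⟩ := hIel v
      exact ⟨a, Subtype.ext (by rw [hSapp, hsmulcoe]; exact ha)⟩
    obtain ⟨σ, hσ⟩ := Module.projective_lifting_property S LinearMap.id hSsurj
    set T : A →ₗ[F] F := f.flip eV with hTdef
    have hTapp : ∀ a : A, T a = f a eV := fun a => rfl
    have hker : ∀ a : A, S a = 0 → T a = 0 := by
      intro a ha
      rw [hTapp]
      exact hf a eV (by rw [← hSapp]; exact ha)
    set Φ : ↥I →ₗ[F] F := T.comp σ with hΦdef
    have hTS : ∀ a : A, Φ (S a) = T a := by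
      intro a
      have h1 : S (σ (S a)) = S a := by
        have := LinearMap.ext_iff.mp hσ (S a)
        simpa using this
      have h2 : S (σ (S a) - a) = 0 := by rw [map_sub, h1, sub_self]
      have h3 := hker _ h2
      rw [map_sub] at h3
      have h4 : T (σ (S a)) = T a := by
        have := sub_eq_zero.mp h3
        exact this
      calc Φ (S a) = T (σ (S a)) := rfl
        _ = T a := h4
    refine ⟨Φ, ?_⟩
    intro x v
    have hvmem : (v : A) ∈ {x : A | ∃ a ∈ EA, a * e = x} := by
      rw [← hset]; exact v.2
    obtain ⟨p, hpEA, hpe⟩ := hvmem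
    have hv : v = p • eV := Subtype.ext (by rw [hsmulcoe]; exact hpe.symm)
    have hxv : x • v = S (x * p) := by
      rw [hSapp, hv, ← mul_smul]
    calc f x v = f x (p • eV) := by rw [hv]
      _ = f (x * p) eV := (Stmt19.move_adjoin f hf hpEA x eV).symm
      _ = T (x * p) := rfl
      _ = Φ (S (x * p)) := (hTS _).symm
      _ = Φ (x • v) := by rw [hxv]
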